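/- Let n ≥ 1 and let Φ̃ : Sym(n) → ℂ be the unique continuous function on the space of real symmetric n×n matrices with Φ̃(0) = 0 and exp(Φ̃(A)) = det(I + iA) for all A. Then for every real symmetric n×n matrix A with eigenvalues λ₁,…,λₙ (listed with multiplicity), Im(Φ̃(A)) = ∑_{j=1}^n arctan(λⱼ); in particular Im(Φ̃(A)) ∈ (−nπ/2, nπ/2). -/
import Mathlib

open Matrix Complex Real

/-- Let `Φ̃ : Sym(n) → ℂ` be the (unique) continuous function on the space
of real symmetric `n×n` matrices with `Φ̃ 0 = 0` and `exp (Φ̃ A) = det (I + iA)` for all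
`A`. Then for every real symmetric `A` with eigenvalues `λ₁, …, λₙ`,
`Im (Φ̃ A) = ∑ j, arctan λⱼ`; in particular `Im (Φ̃ A) ∈ (-nπ/2, nπ/2)`. -/
theorem stmt_5 (n : ℕ) (hn : 1 ≤ n)
    (Φ : {A : Matrix (Fin n) (Fin n) ℝ // A.IsSymm} → ℂ)
    (hΦcont : Continuous Φ)
    (hΦ0 : Φ ⟨0, Matrix.transpose_zero⟩ = 0)
    (hΦexp : ∀ A : {A : Matrix (Fin n) (Fin n) ℝ // A.IsSymm},
      Complex.exp (Φ A) = (1 + Complex.I • A.1.map Complex.ofReal).det)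
    (A : {A : Matrix (Fin n) (Fin n) ℝ // A.IsSymm}) (hA : A.1.IsHermitian) :
    (Φ A).im = ∑ j, Real.arctan (hA.eigenvalues j) ∧
    (Φ A).im ∈ Set.Ioo (-(n * Real.pi / 2)) (n * Real.pi / 2) := by
  have : Nonempty (Fin n) := ⟨⟨0, hn⟩⟩
  set lam : Fin n → ℝ := hA.eigenvalues with hlam
  set B : Matrix (Fin n) (Fin n) ℂ := A.1.map Complex.ofReal with hB
  -- determinant computation via the spectral theorem
  have hdet : ∀ c : ℂ, (1 + c • B).det = ∏ j, (1 + c * (lam j : ℂ)) := by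
    intro c
    set U : Matrix (Fin n) (Fin n) ℝ := (hA.eigenvectorUnitary : Matrix (Fin n) (Fin n) ℝ) with hU
    have hUU : U * star U = 1 := (Matrix.mem_unitaryGroup_iff).mp hA.eigenvectorUnitary.2
    have spec : A.1 = U * Matrix.diagonal lam * star U := by
      have := hA.spectral_theorem
      simpa using this
    set φ : ℝ →+* ℂ := Complex.ofRealHom with hφ
    set U' : Matrix (Fin n) (Fin n) ℂ := U.map φ with hU'
    set V : Matrix (Fin n) (Fin n) ℂ := (star U).map φ with hV
    have hUV : U' * V = 1 := by
      rw [hU', hV, ← Matrix.map_mul, hUU, Matrix.map_one _ (map_zero φ) (map_one φ)]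
    have hBspec : B = U' * Matrix.diagonal (fun j => (lam j : ℂ)) * V := by
      have hcoe : A.1.map Complex.ofReal = A.1.map ⇑φ := rfl
      rw [hB, hcoe, spec, Matrix.map_mul, Matrix.map_mul]
      congr 1
      rw [Matrix.diagonal_map (map_zero φ)]
      rfl
    have key : 1 + c • B = U' * (1 + c • Matrix.diagonal (fun j => (lam j : ℂ))) * V := by
      rw [Matrix.mul_add, Matrix.add_mul, Matrix.mul_one, hUV, hBspec]
      congr 1
      rw [Matrix.mul_smul, Matrix.smul_mul]
    rw [key, Matrix.det_mul, Matrix.det_mul, mul_comm (U'.det), mul_assoc, ← Matrix.det_mul, hUV,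
      Matrix.det_one, mul_one]
    rw [← Matrix.diagonal_smul, ← Matrix.diagonal_one, Matrix.diagonal_add, Matrix.det_diagonal]
    simp [Pi.smul_def, smul_eq_mul]
  -- the two paths
  have hsymm : ∀ t : ℝ, (t • A.1).IsSymm := fun t => A.2.smul t
  set f : ℝ → ℂ := fun t => Φ ⟨t • A.1, hsymm t⟩ with hf
  set g : ℝ → ℂ := fun t => ∑ j, Complex.log (1 + Complex.I * t * (lam j : ℂ)) with hg
  have hzre : ∀ (t : ℝ) (j : Fin n), (1 + Complex.I * t * (lam j : ℂ)).re = 1 := by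
    intro t j; simp
  have hzim : ∀ (t : ℝ) (j : Fin n), (1 + Complex.I * t * (lam j : ℂ)).im = t * lam j := by
    intro t j; simp
  have hzne : ∀ (t : ℝ) (j : Fin n), (1 + Complex.I * t * (lam j : ℂ)) ≠ 0 := by
    intro t j h
    have := congrArg Complex.re h
    rw [hzre] at this
    simpa using this
  have hfc : Continuous f := by
    apply hΦcont.comp
    exact Continuous.subtype_mk (continuous_id.smul continuous_const) _
  have hgc : Continuous g := by
    apply continuous_finset_sum
    intro j _
    apply Continuous.clog
    · continuity
    · intro t
      rw [Complex.mem_slitPlane_iff]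
      left
      rw [hzre]
      norm_num
  have hexp : ∀ t : ℝ, Complex.exp (f t) = Complex.exp (g t) := by
    intro t
    rw [hg]
    simp only []
    rw [Complex.exp_sum]
    have h1 : ∀ j ∈ Finset.univ, Complex.exp (Complex.log (1 + Complex.I * t * (lam j : ℂ)))
        = 1 + Complex.I * t * (lam j : ℂ) := fun j _ => Complex.exp_log (hzne t j)
    rw [Finset.prod_congr rfl h1]
    rw [hf]
    simp only []
    rw [hΦexp ⟨t • A.1, hsymm t⟩]
    have hmap : (t • A.1).map Complex.ofReal = (t : ℂ) • B := by
      ext i j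
      simp [hB, Matrix.map_apply]
    rw [hmap, smul_smul, hdet (Complex.I * t)]
  -- the difference of imaginary parts
  set h : ℝ → ℝ := fun t => (f t - g t).im with hh
  have hhc : Continuous h := Complex.continuous_im.comp (hfc.sub hgc)
  have hhint : ∀ t : ℝ, ∃ m : ℤ, h t = m * (2 * Real.pi) := by
    intro t
    obtain ⟨m, hm⟩ := Complex.exp_eq_exp_iff_exists_int.mp (hexp t)
    refine ⟨m, ?_⟩
    rw [hh]
    simp only []
    rw [hm]
    simp
  have hg0 : g 0 = 0 := by
    rw [hg]
    simp
  have hf0 : f 0 = 0 := by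
    rw [hf]
    simp only []
    have : (⟨(0:ℝ) • A.1, hsymm 0⟩ : {A : Matrix (Fin n) (Fin n) ℝ // A.IsSymm})
        = ⟨0, Matrix.transpose_zero⟩ := Subtype.ext (zero_smul ℝ A.1)
    rw [this, hΦ0]
  have hh0 : h 0 = 0 := by rw [hh]; simp only []; rw [hf0, hg0]; simp
  have hh1 : h 1 = 0 := by
    by_contra hne
    obtain ⟨m, hm⟩ := hhint 1
    have hpi : 0 < Real.pi := Real.pi_pos
    have notpi : ∀ t ∈ Set.Icc (0:ℝ) 1, h t ≠ Real.pi ∧ h t ≠ -Real.pi := by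
      intro t _
      obtain ⟨k, hk⟩ := hhint t
      constructor
      · intro hcon
        rw [hcon] at hk
        have h2k : ((2*k : ℤ) : ℝ) * Real.pi = 1 * Real.pi := by push_cast; linarith
        have h2k' : ((2*k : ℤ) : ℝ) = ((1:ℤ):ℝ) :=
          mul_right_cancel₀ Real.pi_ne_zero (by push_cast at h2k ⊢; linarith)
        have : (2*k : ℤ) = 1 := by exact_mod_cast h2k'
        omega
      · intro hcon
        rw [hcon] at hk
        have h2k : ((2*k : ℤ) : ℝ) * Real.pi = ((-1:ℤ):ℝ) * Real.pi := by push_cast; linarith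
        have h2k' : ((2*k : ℤ) : ℝ) = ((-1:ℤ):ℝ) :=
          mul_right_cancel₀ Real.pi_ne_zero h2k
        have : (2*k : ℤ) = -1 := by exact_mod_cast h2k'
        omega
    rcases lt_or_gt_of_ne hne with hlt | hgt
    · -- h 1 < 0, so h 1 = 2π m with m ≤ -1, so h 1 ≤ -2π < -π < 0 = h 0
      have hm1 : (m : ℝ) ≤ -1 := by
        have : m < 0 := by
          by_contra hcon
          push_neg at hcon
          have : (0:ℝ) ≤ (m:ℝ) := by exact_mod_cast hcon
          nlinarith
        have h' : m ≤ -1 := by omega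
        exact_mod_cast h'
      have : h 1 ≤ -(2 * Real.pi) := by rw [hm]; nlinarith
      have hmem : -Real.pi ∈ Set.Icc (h 1) (h 0) := by
        constructor <;> [linarith; linarith]
      obtain ⟨t, ht, hval⟩ := intermediate_value_Icc' (by norm_num : (0:ℝ) ≤ 1) hhc.continuousOn hmem
      exact (notpi t ht).2 hval
    · have hm1 : (1:ℝ) ≤ (m:ℝ) := by
        have : 0 < m := by
          by_contra hcon
          push_neg at hcon
          have : (m:ℝ) ≤ 0 := by exact_mod_cast hcon
          nlinarith
        exact_mod_cast this
      have : 2 * Real.pi ≤ h 1 := by rw [hm]; nlinarith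
      have hmem : Real.pi ∈ Set.Icc (h 0) (h 1) := by
        constructor <;> [linarith; linarith]
      obtain ⟨t, ht, hval⟩ := intermediate_value_Icc (by norm_num : (0:ℝ) ≤ 1) hhc.continuousOn hmem
      exact (notpi t ht).1 hval
  -- conclude
  have hA1 : A = ⟨(1:ℝ) • A.1, hsymm 1⟩ := Subtype.ext (one_smul ℝ A.1).symm
  have hΦim : (Φ A).im = (g 1).im := by
    have : (f 1).im = (g 1).im := by
      have := hh1
      rw [hh] at this
      simp only [Complex.sub_im] at this
      linarith
    rw [hA1]; exact this
  have hargs : ∀ j : Fin n, (Complex.log (1 + Complex.I * (1:ℝ) * (lam j : ℂ))).im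
      = Real.arctan (lam j) := by
    intro j
    set z : ℂ := 1 + Complex.I * (1:ℝ) * (lam j : ℂ) with hz
    rw [Complex.log_im]
    have hre : z.re = 1 := hzre 1 j
    have him : z.im = lam j := by rw [hz, hzim]; ring
    have h1 : -(Real.pi/2) < Complex.arg z :=
      Complex.neg_pi_div_two_lt_arg_iff.mpr (Or.inl (by rw [hre]; norm_num))
    have h2 : Complex.arg z < Real.pi/2 :=
      Complex.arg_lt_pi_div_two_iff.mpr (Or.inl (by rw [hre]; norm_num))
    have h3 : Real.tan (Complex.arg z) = lam j := by
      rw [Complex.tan_arg, hre, him]; simp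
    rw [← h3, Real.arctan_tan h1 h2]
  have hmain : (Φ A).im = ∑ j, Real.arctan (lam j) := by
    rw [hΦim, hg]
    simp only [Complex.im_sum]
    exact Finset.sum_congr rfl fun j _ => hargs j
  refine ⟨hmain, ?_⟩
  rw [hmain]
  constructor
  · have : -(n * Real.pi / 2) = ∑ _j : Fin n, -(Real.pi / 2) := by
      simp [Finset.sum_const]; ring
    rw [this]
    exact Finset.sum_lt_sum_of_nonempty Finset.univ_nonempty
      (fun j _ => Real.neg_pi_div_two_lt_arctan (lam j))
  · have : (n * Real.pi / 2 : ℝ) = ∑ _j : Fin n, (Real.pi / 2) := by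
      simp [Finset.sum_const]; ring
    rw [this]
    exact Finset.sum_lt_sum_of_nonempty Finset.univ_nonempty
      (fun j _ => Real.arctan_lt_pi_div_two (lam j))
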